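/- Let m ≥ 3 be an odd integer and let Σ be the order-two subgroup of G₃(m) generated by the involution [j,j]. Then the normalizer of Σ in G₃(m) has exactly 8 elements and is isomorphic to the direct product ℤ/4ℤ × ℤ/2ℤ. -/

import Mathlib

noncomputable section

open Quaternion Real

/-- The quaternion `i`. -/
def qi : Quaternion ℝ := ⟨0, 1, 0, 0⟩
/-- The quaternion `j`. -/
def qj : Quaternion ℝ := ⟨0, 0, 1, 0⟩
/-- The quaternion `k`. -/
def qk : Quaternion ℝ := ⟨0, 0, 0, 1⟩
/-- The unit quaternion `e_s = cos(π/s) + sin(π/s) i`. -/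
def es (s : ℕ) : Quaternion ℝ := ⟨Real.cos (Real.pi / s), Real.sin (Real.pi / s), 0, 0⟩

lemma norm_eq_one_of_normSq {a : Quaternion ℝ} (h : Quaternion.normSq a = 1) : ‖a‖ = 1 := by
  have h2 : ‖a‖ * ‖a‖ = 1 := by rw [← Quaternion.normSq_eq_norm_mul_self, h]
  rcases mul_self_eq_one_iff.1 h2 with h' | h'
  · exact h'
  · nlinarith [norm_nonneg a]

lemma norm_qi : ‖qi‖ = 1 := norm_eq_one_of_normSq (by rw [Quaternion.normSq_def']; simp [qi])
lemma norm_qj : ‖qj‖ = 1 := norm_eq_one_of_normSq (by rw [Quaternion.normSq_def']; simp [qj])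
lemma norm_qk : ‖qk‖ = 1 := norm_eq_one_of_normSq (by rw [Quaternion.normSq_def']; simp [qk])
lemma norm_es (s : ℕ) : ‖es s‖ = 1 :=
  norm_eq_one_of_normSq (by
    rw [Quaternion.normSq_def']
    simp only [es]
    simp [Real.sin_sq_add_cos_sq, Real.cos_sq_add_sin_sq])

lemma self_mul_star_of_norm_one {a : Quaternion ℝ} (h : ‖a‖ = 1) : a * star a = 1 := by
  rw [Quaternion.self_mul_star]
  have h1 : Quaternion.normSq a = 1 := by rw [Quaternion.normSq_eq_norm_mul_self, h, mul_one]
  rw [h1]; norm_num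

lemma star_mul_self_of_norm_one {a : Quaternion ℝ} (h : ‖a‖ = 1) : star a * a = 1 := by
  rw [Quaternion.star_mul_self]
  have h1 : Quaternion.normSq a = 1 := by rw [Quaternion.normSq_eq_norm_mul_self, h, mul_one]
  rw [h1]; norm_num

/-- The rotation `[l,r] : x ↦ l̄ x r` of `ℝ⁴ ≅ ℍ`, for unit quaternions `l, r`. -/
def qrot (l r : Quaternion ℝ) (hl : ‖l‖ = 1) (hr : ‖r‖ = 1) :
    Quaternion ℝ ≃ₗ[ℝ] Quaternion ℝ where
  toFun x := star l * x * r
  invFun x := l * x * star r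
  map_add' x y := by noncomm_ring
  map_smul' c x := by simp [mul_smul_comm, smul_mul_assoc]
  left_inv x := by
    have h : l * (star l * x * r) * star r = (l * star l) * x * (r * star r) := by noncomm_ring
    simp [h, self_mul_star_of_norm_one hl, self_mul_star_of_norm_one hr]
  right_inv x := by
    have h : star l * (l * x * star r) * r = (star l * l) * x * (star r * r) := by noncomm_ring
    simp [h, star_mul_self_of_norm_one hl, star_mul_self_of_norm_one hr]

/-- The group `G₁(m)`. -/
def G1 (m : ℕ) : Subgroup (Quaternion ℝ ≃ₗ[ℝ] Quaternion ℝ) :=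
  Subgroup.closure
    {qrot (es m) 1 (norm_es m) norm_one,
     qrot 1 qi norm_one norm_qi,
     qrot 1 qj norm_one norm_qj,
     qrot qj (es 4) norm_qj (norm_es 4)}

/-- The group `G₂(m)`. -/
def G2 (m : ℕ) : Subgroup (Quaternion ℝ ≃ₗ[ℝ] Quaternion ℝ) :=
  Subgroup.closure
    {qrot (es m) 1 (norm_es m) norm_one,
     qrot 1 qi norm_one norm_qi,
     qrot (es (2 * m)) qj (norm_es (2 * m)) norm_qj,
     qrot qj (es 4) norm_qj (norm_es 4)}

/-- The group `G₃(m)`. -/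
def G3 (m : ℕ) : Subgroup (Quaternion ℝ ≃ₗ[ℝ] Quaternion ℝ) :=
  Subgroup.closure
    {qrot (es m) 1 (norm_es m) norm_one,
     qrot 1 qi norm_one norm_qi,
     qrot qj 1 norm_qj norm_one,
     qrot 1 qj norm_one norm_qj}

/-- The group `F₁(m)`. -/
def F1 (m : ℕ) : Subgroup (Quaternion ℝ ≃ₗ[ℝ] Quaternion ℝ) :=
  Subgroup.closure
    {qrot (es m) qi (norm_es m) norm_qi,
     qrot 1 qj norm_one norm_qj}

/-- The order-two subgroup `Σ` generated by the involution `[j, j]`. -/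
def SigmaJJ : Subgroup (Quaternion ℝ ≃ₗ[ℝ] Quaternion ℝ) :=
  Subgroup.closure {qrot qj qj norm_qj norm_qj}

/-- The normalizer of `Σ` in `G₃(m)`, i.e. `{g ∈ G₃(m) : g Σ g⁻¹ = Σ}`. -/
def normalizerInG3 (m : ℕ) : Subgroup (Quaternion ℝ ≃ₗ[ℝ] Quaternion ℝ) :=
  Subgroup.normalizer (SigmaJJ : Set (Quaternion ℝ ≃ₗ[ℝ] Quaternion ℝ)) ⊓ G3 m

/-! ### Auxiliary material for the normalizer computation -/

section Aux

open Quaternion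

/-- The embedding of `ℂ` into the quaternions. -/
def cq : ℂ →+* Quaternion ℝ where
  toFun z := ⟨z.re, z.im, 0, 0⟩
  map_one' := by ext <;> simp
  map_mul' z w := by
    ext
    · exact ((Quaternion.re_mul _ _).trans (by simp [Complex.mul_re])).symm
    · exact ((Quaternion.imI_mul _ _).trans (by simp [Complex.mul_im])).symm
    · exact ((Quaternion.imJ_mul _ _).trans (by simp)).symm
    · exact ((Quaternion.imK_mul _ _).trans (by simp)).symm
  map_zero' := by ext <;> simp
  map_add' z w := by
    ext
    · exact ((Quaternion.re_add _ _).trans (by simp)).symm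
    · exact ((Quaternion.imI_add _ _).trans (by simp)).symm
    · exact ((Quaternion.imJ_add _ _).trans (by simp)).symm
    · exact ((Quaternion.imK_add _ _).trans (by simp)).symm

lemma cq_re (z : ℂ) : (cq z).re = z.re := rfl
lemma cq_imI (z : ℂ) : (cq z).imI = z.im := rfl
lemma cq_imJ (z : ℂ) : (cq z).imJ = 0 := rfl
lemma cq_imK (z : ℂ) : (cq z).imK = 0 := rfl

lemma cq_inj : Function.Injective cq := by
  intro z w h
  rw [Quaternion.ext_iff] at h
  exact Complex.ext h.1 h.2.1

lemma cq_star (z : ℂ) : star (cq z) = cq (starRingEnd ℂ z) := by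
  ext <;> simp [cq_re, cq_imI, cq_imJ, cq_imK]

lemma star_qj : star qj = -qj := by ext <;> simp <;> simp [qj]

lemma qj_sq : qj * qj = -1 := by ext <;> simp [Quaternion.re_mul, Quaternion.imI_mul, Quaternion.imJ_mul, Quaternion.imK_mul] <;> simp [qj]

lemma qj_mul_cq (z : ℂ) : qj * cq z = cq (starRingEnd ℂ z) * qj := by
  ext <;> simp [Quaternion.re_mul, Quaternion.imI_mul, Quaternion.imJ_mul, Quaternion.imK_mul, cq_re, cq_imI, cq_imJ, cq_imK] <;> simp [qj]

lemma norm_cq {z : ℂ} (h : ‖z‖ = 1) : ‖cq z‖ = 1 := by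
  apply norm_eq_one_of_normSq
  have h3 : ‖z‖ = 1 := h
  have := Complex.sq_norm z
  rw [h3] at this
  simp only [Complex.normSq_apply, one_pow] at this
  simp only [Quaternion.normSq_def', cq_re, cq_imI, cq_imJ, cq_imK]
  nlinarith

lemma norm_one_of_pow {z : ℂ} {n : ℕ} (hn : n ≠ 0) (h : z ^ n = 1) : ‖z‖ = 1 := by
  have h1 : ‖z‖ ^ n = 1 := by rw [← norm_pow, h, norm_one]
  exact (pow_left_strictMonoOn₀ hn).injOn (norm_nonneg z) (by norm_num) (by simpa using h1)

/-- The predicate describing elements of the subgroup of unit quaternions generated by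
`e_s` (lying in the `⟨1,i⟩`-plane, of finite order dividing `n`) and `j`. -/
def Pz (n : ℕ) (l : Quaternion ℝ) : Prop :=
  ∃ z : ℂ, z ^ n = 1 ∧ (l = cq z ∨ l = cq z * qj)

lemma Pz.norm {n : ℕ} {l : Quaternion ℝ} (hn : n ≠ 0) (h : Pz n l) : ‖l‖ = 1 := by
  obtain ⟨z, hz, h | h⟩ := h <;> subst h
  · exact norm_cq (norm_one_of_pow hn hz)
  · rw [norm_mul, norm_cq (norm_one_of_pow hn hz), norm_qj, mul_one]

lemma Pz.one {n : ℕ} : Pz n 1 := ⟨1, one_pow n, Or.inl (map_one cq).symm⟩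

lemma Pz.mul {n : ℕ} {a b : Quaternion ℝ} (hn : Even n) (ha : Pz n a) (hb : Pz n b) :
    Pz n (a * b) := by
  obtain ⟨z, hz, hza | hza⟩ := ha <;> obtain ⟨w, hw, hwb | hwb⟩ := hb <;> subst hza <;> subst hwb
  · exact ⟨z * w, by rw [mul_pow, hz, hw, mul_one], Or.inl (map_mul cq z w).symm⟩
  · exact ⟨z * w, by rw [mul_pow, hz, hw, mul_one],
      Or.inr (by rw [← mul_assoc, map_mul])⟩
  · refine ⟨z * starRingEnd ℂ w, ?_, Or.inr ?_⟩
    · rw [mul_pow, hz, one_mul, ← map_pow, hw, map_one]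
    · rw [mul_assoc, qj_mul_cq, ← mul_assoc, map_mul]
  · refine ⟨-(z * starRingEnd ℂ w), ?_, Or.inl ?_⟩
    · rw [hn.neg_pow, mul_pow, hz, one_mul, ← map_pow, hw, map_one]
    · have h1 : cq z * qj * (cq w * qj) = cq z * (qj * cq w) * qj := by noncomm_ring
      rw [map_neg, map_mul, h1, qj_mul_cq]
      have h2 : cq z * (cq (starRingEnd ℂ w) * qj) * qj
          = cq z * cq (starRingEnd ℂ w) * (qj * qj) := by noncomm_ring
      rw [h2, qj_sq, mul_neg_one]

lemma Pz.star {n : ℕ} {a : Quaternion ℝ} (hn : Even n) (ha : Pz n a) : Pz n (star a) := by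
  obtain ⟨z, hz, hza | hza⟩ := ha <;> subst hza
  · exact ⟨starRingEnd ℂ z, by rw [← map_pow, hz, map_one], Or.inl (cq_star z)⟩
  · refine ⟨-z, by rw [hn.neg_pow, hz], Or.inr ?_⟩
    rw [star_mul, star_qj, cq_star, neg_mul, qj_mul_cq, Complex.conj_conj, map_neg, neg_mul]

end Aux
section QrotAlgebra

open Quaternion

lemma qrot_apply (l r : Quaternion ℝ) (hl hr) (x : Quaternion ℝ) :
    qrot l r hl hr x = star l * x * r := rfl

lemma qrot_mul {l r l' r' : Quaternion ℝ} (hl : ‖l‖ = 1) (hr : ‖r‖ = 1) (hl' : ‖l'‖ = 1)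
    (hr' : ‖r'‖ = 1) (h1 : ‖l' * l‖ = 1) (h2 : ‖r' * r‖ = 1) :
    qrot l r hl hr * qrot l' r' hl' hr' = qrot (l' * l) (r' * r) h1 h2 := by
  apply LinearEquiv.ext
  intro x
  show star l * (star l' * x * r') * r = star (l' * l) * x * (r' * r)
  rw [star_mul]
  noncomm_ring

lemma qrot_congr {l l' r r' : Quaternion ℝ} (h1 : l = l') (h2 : r = r')
    (hl' : ‖l'‖ = 1) (hr' : ‖r'‖ = 1) (hl : ‖l‖ = 1) (hr : ‖r‖ = 1) :
    qrot l r hl hr = qrot l' r' hl' hr' := by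
  subst h1; subst h2; rfl

lemma qrot_one : qrot 1 1 norm_one norm_one = (1 : Quaternion ℝ ≃ₗ[ℝ] Quaternion ℝ) := by
  apply LinearEquiv.ext
  intro x
  show star (1 : Quaternion ℝ) * x * 1 = x
  simp

lemma qrot_neg_neg {l r : Quaternion ℝ} (hl : ‖l‖ = 1) (hr : ‖r‖ = 1) (hl' : ‖-l‖ = 1)
    (hr' : ‖-r‖ = 1) : qrot (-l) (-r) hl' hr' = qrot l r hl hr := by
  apply LinearEquiv.ext
  intro x
  show star (-l) * x * (-r) = star l * x * r
  simp

lemma qrot_inv {l r : Quaternion ℝ} (hl : ‖l‖ = 1) (hr : ‖r‖ = 1) (hl' : ‖star l‖ = 1)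
    (hr' : ‖star r‖ = 1) : (qrot l r hl hr)⁻¹ = qrot (star l) (star r) hl' hr' := by
  apply inv_eq_of_mul_eq_one_right
  rw [qrot_mul hl hr hl' hr'
    (by rw [star_mul_self_of_norm_one hl]; exact norm_one)
    (by rw [star_mul_self_of_norm_one hr]; exact norm_one),
    qrot_congr (star_mul_self_of_norm_one hl) (star_mul_self_of_norm_one hr)
      norm_one norm_one, qrot_one]

/-- a quaternion commuting with `i` and `j` is real -/
lemma central_real {u : Quaternion ℝ} (h1 : u * qi = qi * u) (h2 : u * qj = qj * u) :
    u = ((u.re : ℝ) : Quaternion ℝ) := by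
  rw [Quaternion.ext_iff] at h1 h2 ⊢
  simp [Quaternion.re_mul, Quaternion.imI_mul, Quaternion.imJ_mul, Quaternion.imK_mul] at h1 h2
  simp [qi, qj] at h1 h2
  obtain ⟨a1, a2⟩ := h1
  obtain ⟨b1, b2⟩ := h2
  refine ⟨by simp, ?_, ?_, ?_⟩ <;> simp <;> linarith

lemma qrot_eq {a b c d : Quaternion ℝ} {ha : ‖a‖ = 1} {hb : ‖b‖ = 1} {hc : ‖c‖ = 1}
    {hd : ‖d‖ = 1} (h : qrot a b ha hb = qrot c d hc hd) :
    (c = a ∧ d = b) ∨ (c = -a ∧ d = -b) := by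
  have hx : ∀ x : Quaternion ℝ, star a * x * b = star c * x * d := fun x =>
    congrArg (fun e : Quaternion ℝ ≃ₗ[ℝ] Quaternion ℝ => e x) h
  have hcc : c * star c = 1 := self_mul_star_of_norm_one hc
  have hbb : b * star b = 1 := self_mul_star_of_norm_one hb
  have key : ∀ x : Quaternion ℝ, (c * star a) * x = x * (d * star b) := by
    intro x
    have h2 := congrArg (fun y => c * y * star b) (hx x)
    have l1 : c * (star a * x * b) * star b = c * star a * x * (b * star b) := by noncomm_ring
    have l2 : c * (star c * x * d) * star b = (c * star c) * x * (d * star b) := by noncomm_ring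
    rw [l1, l2, hbb, hcc, mul_one, one_mul] at h2
    exact h2
  have hu2 : c * star a = d * star b := by simpa using key 1
  have hreal : c * star a = (((c * star a).re : ℝ) : Quaternion ℝ) :=
    central_real (by rw [key qi, hu2]) (by rw [key qj, hu2])
  set w := (c * star a).re with hw
  have hnorm : ‖c * star a‖ = 1 := by rw [norm_mul, Quaternion.norm_star, hc, ha, mul_one]
  have hwnorm : |w| = 1 := by
    rw [hreal] at hnorm
    simpa using hnorm
  have hca : c = ((w : ℝ) : Quaternion ℝ) * a := by
    calc c = c * (star a * a) := by rw [star_mul_self_of_norm_one ha, mul_one]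
    _ = (c * star a) * a := by rw [mul_assoc]
    _ = _ := by rw [hreal]
  have hdb : d = ((w : ℝ) : Quaternion ℝ) * b := by
    calc d = d * (star b * b) := by rw [star_mul_self_of_norm_one hb, mul_one]
    _ = (d * star b) * b := by rw [mul_assoc]
    _ = _ := by rw [← hu2, hreal]
  rcases (abs_eq (by norm_num : (0:ℝ) ≤ 1)).mp hwnorm with hw1 | hw1 <;> rw [hw1] at hca hdb
  · left
    constructor <;> simp [hca, hdb]
  · right
    constructor <;> simp [hca, hdb]

end QrotAlgebra
section Gens

open Quaternion

lemma norm_neg_one : ‖(-1 : Quaternion ℝ)‖ = 1 := by simp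
lemma norm_neg_qj : ‖-qj‖ = 1 := by simp [norm_qj]
lemma norm_mul_one {a b : Quaternion ℝ} (ha : ‖a‖ = 1) (hb : ‖b‖ = 1) : ‖a * b‖ = 1 := by
  rw [norm_mul, ha, hb, mul_one]

/-- `[j,1]` -/
def gA : Quaternion ℝ ≃ₗ[ℝ] Quaternion ℝ := qrot qj 1 norm_qj norm_one
/-- `[j,j]` -/
def gS : Quaternion ℝ ≃ₗ[ℝ] Quaternion ℝ := qrot qj qj norm_qj norm_qj

lemma gA_def : gA = qrot qj 1 norm_qj norm_one := rfl
lemma gS_def : gS = qrot qj qj norm_qj norm_qj := rfl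

lemma qrot_eq_qrot_of {l r l' r' : Quaternion ℝ} {hl hr hl' hr'}
    (h : ∀ x : Quaternion ℝ, star l * x * r = star l' * x * r') :
    qrot l r hl hr = qrot l' r' hl' hr' := LinearEquiv.ext h

lemma gA_pow2 : gA ^ 2 = qrot (-1) 1 norm_neg_one norm_one := by
  rw [pow_two, gA_def, qrot_mul norm_qj norm_one norm_qj norm_one
    (norm_mul_one norm_qj norm_qj) (norm_mul_one norm_one norm_one)]
  exact qrot_congr qj_sq (one_mul 1) _ _ _ _

lemma gA_pow3 : gA ^ 3 = qrot (-qj) 1 norm_neg_qj norm_one := by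
  rw [pow_succ, gA_pow2, gA_def, qrot_mul norm_neg_one norm_one norm_qj norm_one
    (norm_mul_one norm_qj norm_neg_one) (norm_mul_one norm_one norm_one)]
  exact qrot_congr (by rw [mul_neg_one]) (one_mul 1) _ _ _ _

lemma gA_pow4 : gA ^ 4 = 1 := by
  rw [pow_succ, gA_pow3, gA_def, qrot_mul norm_neg_qj norm_one norm_qj norm_one
    (norm_mul_one norm_qj norm_neg_qj) (norm_mul_one norm_one norm_one),
    qrot_congr (show qj * -qj = 1 by rw [mul_neg, qj_sq, neg_neg]) (one_mul 1)
      norm_one norm_one _ _, qrot_one]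

lemma gS_pow2 : gS ^ 2 = 1 := by
  rw [pow_two, gS_def, qrot_mul norm_qj norm_qj norm_qj norm_qj
    (norm_mul_one norm_qj norm_qj) (norm_mul_one norm_qj norm_qj),
    qrot_congr qj_sq qj_sq norm_neg_one norm_neg_one _ _,
    qrot_neg_neg norm_one norm_one, qrot_one]

lemma gA_comm_gS : Commute gA gS := by
  show gA * gS = gS * gA
  rw [gA_def, gS_def,
    qrot_mul norm_qj norm_one norm_qj norm_qj (norm_mul_one norm_qj norm_qj)
      (norm_mul_one norm_qj norm_one),
    qrot_mul norm_qj norm_qj norm_qj norm_one (norm_mul_one norm_qj norm_qj)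
      (norm_mul_one norm_one norm_qj)]
  exact qrot_congr rfl (by rw [mul_one, one_mul]) _ _ _ _

lemma gS_ne_one : gS ≠ 1 := by
  intro h
  have h2 : star qj * qi * qj = qi := congrArg (fun e : Quaternion ℝ ≃ₗ[ℝ] Quaternion ℝ => e qi) h
  rw [Quaternion.ext_iff] at h2
  simp [Quaternion.re_mul, Quaternion.imI_mul, Quaternion.imJ_mul, Quaternion.imK_mul] at h2
  simp [qi, qj] at h2
  exact absurd h2 (by norm_num)

lemma gS_mem_sigma : gS ∈ SigmaJJ := Subgroup.subset_closure (Set.mem_singleton _)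

lemma sigma_eq {x : Quaternion ℝ ≃ₗ[ℝ] Quaternion ℝ} (hx : x ∈ SigmaJJ) : x = 1 ∨ x = gS := by
  rw [SigmaJJ, Subgroup.mem_closure_singleton] at hx
  obtain ⟨n, hn⟩ := hx
  rcases Int.even_or_odd n with ⟨k, hk⟩ | ⟨k, hk⟩
  · left
    rw [← hn, hk, ← two_mul, zpow_mul]
    have h2 : (qrot qj qj norm_qj norm_qj : Quaternion ℝ ≃ₗ[ℝ] Quaternion ℝ) ^ (2 : ℤ) = 1 := by
      rw [show ((2:ℤ) = ((2:ℕ):ℤ)) from rfl, zpow_natCast, ← gS_def, gS_pow2]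
    rw [h2, one_zpow]
  · right
    rw [← hn, hk, zpow_add, zpow_mul]
    have h2 : (qrot qj qj norm_qj norm_qj : Quaternion ℝ ≃ₗ[ℝ] Quaternion ℝ) ^ (2 : ℤ) = 1 := by
      rw [show ((2:ℤ) = ((2:ℕ):ℤ)) from rfl, zpow_natCast, ← gS_def, gS_pow2]
    rw [h2, one_zpow, one_mul, zpow_one, gS_def]

lemma mem_norm_of_comm {g : Quaternion ℝ ≃ₗ[ℝ] Quaternion ℝ} (hg : g * gS = gS * g) :
    g ∈ Subgroup.normalizer (SigmaJJ : Set (Quaternion ℝ ≃ₗ[ℝ] Quaternion ℝ)) := by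
  rw [Subgroup.mem_normalizer_iff]
  intro h
  constructor
  · intro hh
    rcases sigma_eq hh with rfl | rfl
    · simpa using Subgroup.one_mem SigmaJJ
    · have h3 : g * gS * g⁻¹ = gS := by rw [hg, mul_assoc, mul_inv_cancel, mul_one]
      rw [h3]; exact gS_mem_sigma
  · intro hh
    rcases sigma_eq hh with h1 | h1
    · have h3 : h = 1 := by
        have h2 : h = g⁻¹ * (g * h * g⁻¹) * g := by group
        rw [h1] at h2
        simpa using h2
      rw [h3]; exact Subgroup.one_mem SigmaJJ
    · have h3 : h = gS := by
        have h2 : h = g⁻¹ * (g * h * g⁻¹) * g := by group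
        rw [h1, mul_assoc, ← hg, ← mul_assoc, inv_mul_cancel, one_mul] at h2
        exact h2
      rw [h3]; exact gS_mem_sigma

end Gens
section BigH

open Quaternion

/-- An overgroup of `G₃(m)` with explicitly described elements. -/
def bigH (m : ℕ) : Subgroup (Quaternion ℝ ≃ₗ[ℝ] Quaternion ℝ) where
  carrier := {g | ∃ (l r : Quaternion ℝ) (hl : ‖l‖ = 1) (hr : ‖r‖ = 1),
    Pz (2 * m) l ∧ Pz 4 r ∧ g = qrot l r hl hr}
  one_mem' := ⟨1, 1, norm_one, norm_one, Pz.one, Pz.one, qrot_one.symm⟩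
  mul_mem' := by
    rintro a b ⟨l, r, hl, hr, Pl, Pr, rfl⟩ ⟨l', r', hl', hr', Pl', Pr', rfl⟩
    exact ⟨l' * l, r' * r, norm_mul_one hl' hl, norm_mul_one hr' hr,
      Pz.mul (even_two_mul m) Pl' Pl, Pz.mul (⟨2, rfl⟩ : Even 4) Pr' Pr,
      qrot_mul hl hr hl' hr' (norm_mul_one hl' hl) (norm_mul_one hr' hr)⟩
  inv_mem' := by
    rintro a ⟨l, r, hl, hr, Pl, Pr, rfl⟩
    exact ⟨star l, star r, by rwa [Quaternion.norm_star], by rwa [Quaternion.norm_star],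
      Pz.star (even_two_mul m) Pl, Pz.star (⟨2, rfl⟩ : Even 4) Pr,
      qrot_inv hl hr (by rwa [Quaternion.norm_star]) (by rwa [Quaternion.norm_star])⟩

lemma I_pow_four : Complex.I ^ 4 = 1 := by
  rw [show (4:ℕ) = 2 * 2 from rfl, pow_mul, Complex.I_sq]
  norm_num

lemma G3_le_bigH (m : ℕ) (hm : m ≠ 0) : G3 m ≤ bigH m := by
  rw [G3]
  refine (Subgroup.closure_le _).mpr ?_
  rintro g hg
  simp only [Set.mem_insert_iff, Set.mem_singleton_iff] at hg
  rcases hg with rfl | rfl | rfl | rfl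
  · refine ⟨es m, 1, norm_es m, norm_one,
      ⟨Complex.exp ((Real.pi / m : ℝ) * Complex.I), ?_, Or.inl ?_⟩, Pz.one, rfl⟩
    · rw [← Complex.exp_nat_mul]
      have h2 : ((2 * m : ℕ) : ℂ) * ((Real.pi / m : ℝ) * Complex.I)
          = 2 * Real.pi * Complex.I := by
        have hm' : (m : ℂ) ≠ 0 := by exact_mod_cast Nat.cast_ne_zero.mpr hm
        push_cast
        field_simp
      rw [h2, Complex.exp_two_pi_mul_I]
    · ext
      · rw [cq_re, Complex.exp_ofReal_mul_I_re]; rfl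
      · rw [cq_imI, Complex.exp_ofReal_mul_I_im]; rfl
      · rfl
      · rfl
  · exact ⟨1, qi, norm_one, norm_qi, Pz.one,
      ⟨Complex.I, I_pow_four, Or.inl (by ext <;> simp [cq_re, cq_imI, cq_imJ, cq_imK] <;> simp [qi])⟩, rfl⟩
  · exact ⟨qj, 1, norm_qj, norm_one,
      ⟨1, one_pow _, Or.inr (by rw [map_one, one_mul])⟩, Pz.one, rfl⟩
  · exact ⟨1, qj, norm_one, norm_qj, Pz.one,
      ⟨1, one_pow _, Or.inr (by rw [map_one, one_mul])⟩, rfl⟩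

lemma real_pow_eq_one {x : ℝ} {n : ℕ} (hn : n ≠ 0) (h : x ^ n = 1) : x = 1 ∨ x = -1 := by
  have h1 : |x| ^ n = 1 := by rw [← abs_pow, h, abs_one]
  have h2 : |x| = 1 :=
    (pow_left_strictMonoOn₀ hn).injOn (abs_nonneg x) (by norm_num) (by simpa using h1)
  exact (abs_eq (by norm_num : (0:ℝ) ≤ 1)).mp h2

lemma Pz_comm_classify {n : ℕ} (hn : n ≠ 0) {l : Quaternion ℝ} (hPl : Pz n l)
    (h : l * qj = qj * l) : l = 1 ∨ l = -1 ∨ l = qj ∨ l = -qj := by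
  obtain ⟨z, hz, rfl | rfl⟩ := hPl
  · rw [qj_mul_cq] at h
    have hz2 : cq z = cq (starRingEnd ℂ z) := by
      have h3 := congrArg (fun t => t * star qj) h
      simpa [mul_assoc, self_mul_star_of_norm_one norm_qj] using h3
    have hzr : z = starRingEnd ℂ z := cq_inj hz2
    have him : z.im = 0 := by
      have h4 := congrArg Complex.im hzr
      simp only [Complex.conj_im] at h4
      linarith
    have hzz : z = ((z.re : ℝ) : ℂ) := Complex.ext (by simp) (by simp [him])
    have hre : z.re ^ n = 1 := by
      have h5 : ((z.re ^ n : ℝ) : ℂ) = 1 := by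
        rw [Complex.ofReal_pow, ← hzz, hz]
      exact_mod_cast h5
    rcases real_pow_eq_one hn hre with h6 | h6 <;> rw [hzz, h6]
    · left; rw [Complex.ofReal_one, map_one]
    · right; left
      rw [show ((-1 : ℝ) : ℂ) = -1 by norm_num, map_neg, map_one]
  · have h7 : cq z * qj * qj = cq z * -1 := by rw [mul_assoc, qj_sq]
    have h8 : qj * (cq z * qj) = cq (starRingEnd ℂ z) * -1 := by
      rw [← mul_assoc, qj_mul_cq, mul_assoc, qj_sq]
    rw [h7, h8] at h
    have hz2 : cq z = cq (starRingEnd ℂ z) := by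
      have h3 := congrArg (fun t => t * -1) h
      simpa using h3
    have hzr : z = starRingEnd ℂ z := cq_inj hz2
    have him : z.im = 0 := by
      have h4 := congrArg Complex.im hzr
      simp only [Complex.conj_im] at h4
      linarith
    have hzz : z = ((z.re : ℝ) : ℂ) := Complex.ext (by simp) (by simp [him])
    have hre : z.re ^ n = 1 := by
      have h5 : ((z.re ^ n : ℝ) : ℂ) = 1 := by
        rw [Complex.ofReal_pow, ← hzz, hz]
      exact_mod_cast h5
    rcases real_pow_eq_one hn hre with h6 | h6 <;> rw [hzz, h6]
    · right; right; left
      rw [Complex.ofReal_one, map_one, one_mul]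
    · right; right; right
      rw [show ((-1 : ℝ) : ℂ) = -1 by norm_num, map_neg, map_one, neg_one_mul]

lemma Pz_anticomm_false {m : ℕ} (hodd : Odd m) {l : Quaternion ℝ} (hPl : Pz (2 * m) l)
    (h : l * qj = -(qj * l)) : False := by
  have key : ∀ z : ℂ, z ^ (2 * m) = 1 → z = -starRingEnd ℂ z → False := by
    intro z hz hzr
    have hre : z.re = 0 := by
      have h4 := congrArg Complex.re hzr
      simp only [Complex.neg_re, Complex.conj_re] at h4
      linarith
    have hzz : z = ((z.im : ℝ) : ℂ) * Complex.I :=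
      Complex.ext (by simp [hre]) (by simp)
    rw [hzz, mul_pow, show Complex.I ^ (2 * m) = (Complex.I ^ 2) ^ m from pow_mul _ 2 m,
      Complex.I_sq, hodd.neg_one_pow] at hz
    have h5 : ((z.im ^ (2 * m) : ℝ) : ℂ) = -1 := by
      rw [Complex.ofReal_pow]
      linear_combination -hz
    have h6 : z.im ^ (2 * m) = -1 := by exact_mod_cast h5
    have h7 : (0:ℝ) ≤ z.im ^ (2 * m) := (even_two_mul m).pow_nonneg _
    linarith
  obtain ⟨z, hz, rfl | rfl⟩ := hPl
  · rw [qj_mul_cq] at h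
    have hz2 : cq z = cq (-starRingEnd ℂ z) := by
      have h3 := congrArg (fun t => t * star qj) h
      rw [map_neg]
      simpa [mul_assoc, self_mul_star_of_norm_one norm_qj] using h3
    exact key z hz (cq_inj hz2)
  · have h7 : cq z * qj * qj = cq z * -1 := by rw [mul_assoc, qj_sq]
    have h8 : qj * (cq z * qj) = cq (starRingEnd ℂ z) * -1 := by
      rw [← mul_assoc, qj_mul_cq, mul_assoc, qj_sq]
    rw [h7, h8] at h
    have hz2 : cq z = cq (-starRingEnd ℂ z) := by
      have h3 := congrArg (fun t => t * -1) h
      rw [map_neg]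
      simpa using h3
    exact key z hz (cq_inj hz2)

end BigH
section Phi

open Quaternion

lemma pow_mod_eq {G : Type*} [Monoid G] (g : G) {n : ℕ} (h : g ^ n = 1) (k : ℕ) :
    g ^ (k % n) = g ^ k := by
  conv_rhs => rw [← Nat.div_add_mod k n, pow_add, pow_mul, h, one_pow, one_mul]

/-- `[j,1]·[j,j] = [-1,j]` -/
lemma AS_val : gA * gS = qrot (-1) qj norm_neg_one norm_qj := by
  rw [gA_def, gS_def, qrot_mul norm_qj norm_one norm_qj norm_qj
    (norm_mul_one norm_qj norm_qj) (norm_mul_one norm_qj norm_one)]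
  exact qrot_congr qj_sq (mul_one qj) _ _ _ _

lemma A2S_val : gA ^ 2 * gS = qrot (-qj) qj norm_neg_qj norm_qj := by
  rw [gA_pow2, gS_def, qrot_mul norm_neg_one norm_one norm_qj norm_qj
    (norm_mul_one norm_qj norm_neg_one) (norm_mul_one norm_qj norm_one)]
  exact qrot_congr (by rw [mul_neg_one]) (mul_one qj) _ _ _ _

lemma A3S_val : gA ^ 3 * gS = qrot 1 qj norm_one norm_qj := by
  rw [gA_pow3, gS_def, qrot_mul norm_neg_qj norm_one norm_qj norm_qj
    (norm_mul_one norm_qj norm_neg_qj) (norm_mul_one norm_qj norm_one)]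
  exact qrot_congr (by rw [mul_neg, qj_sq, neg_neg]) (mul_one qj) _ _ _ _

lemma qrot_ne_one {l r : Quaternion ℝ} {hl hr} {x : Quaternion ℝ}
    (h : star l * x * r ≠ x) : qrot l r hl hr ≠ 1 := by
  intro he
  exact h (congrArg (fun e : Quaternion ℝ ≃ₗ[ℝ] Quaternion ℝ => e x) he)

lemma gA_ne_one : gA ≠ 1 := by
  rw [gA_def]
  apply qrot_ne_one (x := 1)
  intro hq
  rw [Quaternion.ext_iff] at hq
  simp [Quaternion.re_mul, Quaternion.imI_mul, Quaternion.imJ_mul, Quaternion.imK_mul] at hq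
  simp [qj] at hq

lemma A2_ne_one : qrot (-1) 1 norm_neg_one norm_one ≠ 1 := by
  apply qrot_ne_one (x := 1)
  intro hq
  rw [Quaternion.ext_iff] at hq
  simp [QuaternionAlgebra.mk_mul_mk] at hq
  norm_num at hq

lemma A3_ne_one : qrot (-qj) 1 norm_neg_qj norm_one ≠ 1 := by
  apply qrot_ne_one (x := 1)
  intro hq
  rw [Quaternion.ext_iff] at hq
  simp [Quaternion.re_mul, Quaternion.imI_mul, Quaternion.imJ_mul, Quaternion.imK_mul] at hq
  simp [qj] at hq

lemma AS_ne_one : qrot (-1) qj norm_neg_one norm_qj ≠ 1 := by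
  apply qrot_ne_one (x := 1)
  intro hq
  rw [Quaternion.ext_iff] at hq
  simp [Quaternion.re_mul, Quaternion.imI_mul, Quaternion.imJ_mul, Quaternion.imK_mul] at hq
  simp [qj] at hq

lemma A2S_ne_one : qrot (-qj) qj norm_neg_qj norm_qj ≠ 1 := by
  apply qrot_ne_one (x := 1)
  intro hq
  rw [Quaternion.ext_iff] at hq
  simp [Quaternion.re_mul, Quaternion.imI_mul, Quaternion.imJ_mul, Quaternion.imK_mul] at hq
  simp [qj] at hq
  norm_num at hq

lemma A3S_ne_one : qrot 1 qj norm_one norm_qj ≠ 1 := by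
  apply qrot_ne_one (x := 1)
  intro hq
  rw [Quaternion.ext_iff] at hq
  simp [Quaternion.re_mul, Quaternion.imI_mul, Quaternion.imJ_mul, Quaternion.imK_mul] at hq
  simp [qj] at hq

/-- The homomorphism `ℤ/4 × ℤ/2 → G₃(m)` sending the generators to `[j,1]` and `[j,j]`. -/
def phi : Multiplicative (ZMod 4) × Multiplicative (ZMod 2) →*
    (Quaternion ℝ ≃ₗ[ℝ] Quaternion ℝ) where
  toFun p := gA ^ (Multiplicative.toAdd p.1).val * gS ^ (Multiplicative.toAdd p.2).val
  map_one' := by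
    show gA ^ (0 : ZMod 4).val * gS ^ (0 : ZMod 2).val = 1
    rw [ZMod.val_zero, ZMod.val_zero, pow_zero, pow_zero, one_mul]
  map_mul' p q := by
    obtain ⟨a, c⟩ := p
    obtain ⟨b, d⟩ := q
    show gA ^ (Multiplicative.toAdd a + Multiplicative.toAdd b).val
        * gS ^ (Multiplicative.toAdd c + Multiplicative.toAdd d).val = _
    rw [ZMod.val_add, ZMod.val_add, pow_mod_eq gA gA_pow4, pow_mod_eq gS gS_pow2,
      pow_add, pow_add]
    have hc : Commute (gA ^ (Multiplicative.toAdd b).val)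
        (gS ^ (Multiplicative.toAdd c).val) := (gA_comm_gS).pow_pow _ _
    show _ = gA ^ (Multiplicative.toAdd a).val * gS ^ (Multiplicative.toAdd c).val *
      (gA ^ (Multiplicative.toAdd b).val * gS ^ (Multiplicative.toAdd d).val)
    rw [mul_assoc, mul_assoc, ← mul_assoc (gA ^ (Multiplicative.toAdd b).val), hc.eq,
      mul_assoc]

lemma phi_apply (a : ZMod 4) (c : ZMod 2) :
    phi (Multiplicative.ofAdd a, Multiplicative.ofAdd c) = gA ^ a.val * gS ^ c.val := rfl

lemma phi_apply' (p : Multiplicative (ZMod 4) × Multiplicative (ZMod 2)) :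
    phi p = gA ^ (Multiplicative.toAdd p.1).val * gS ^ (Multiplicative.toAdd p.2).val := rfl

lemma phi_inj : Function.Injective phi := by
  rw [injective_iff_map_eq_one]
  rintro ⟨a, c⟩ h
  rw [phi_apply'] at h
  have ha4 : (Multiplicative.toAdd a).val < 4 := ZMod.val_lt _
  have hc2 : (Multiplicative.toAdd c).val < 2 := ZMod.val_lt _
  have hva : (Multiplicative.toAdd a).val = 0 ∨ (Multiplicative.toAdd a).val = 1 ∨
      (Multiplicative.toAdd a).val = 2 ∨ (Multiplicative.toAdd a).val = 3 := by omega
  have hvc : (Multiplicative.toAdd c).val = 0 ∨ (Multiplicative.toAdd c).val = 1 := by omega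
  have haz : (Multiplicative.toAdd a).val = 0 ∧ (Multiplicative.toAdd c).val = 0 := by
    rcases hva with hv | hv | hv | hv <;> rcases hvc with hw | hw <;> rw [hv, hw] at h <;>
        simp only [pow_zero, pow_one, one_mul, mul_one] at h
    · exact ⟨hv, hw⟩
    · exact absurd h gS_ne_one
    · exact absurd h gA_ne_one
    · exact absurd (AS_val.symm.trans h) AS_ne_one
    · exact absurd (gA_pow2.symm.trans h) A2_ne_one
    · exact absurd (A2S_val.symm.trans h) A2S_ne_one
    · exact absurd (gA_pow3.symm.trans h) A3_ne_one
    · exact absurd (A3S_val.symm.trans h) A3S_ne_one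
  have ha : Multiplicative.toAdd a = 0 := by
    have := haz.1
    rwa [ZMod.val_eq_zero] at this
  have hc : Multiplicative.toAdd c = 0 := by
    have := haz.2
    rwa [ZMod.val_eq_zero] at this
  have : a = 1 := ha
  have : c = 1 := hc
  rw [‹a = 1›, ‹c = 1›]
  rfl

end Phi
section RangePhi

open Quaternion

lemma v40 : (0 : ZMod 4).val = 0 := rfl
lemma v41 : (1 : ZMod 4).val = 1 := rfl
lemma v42 : (2 : ZMod 4).val = 2 := rfl
lemma v43 : (3 : ZMod 4).val = 3 := rfl
lemma v20 : (0 : ZMod 2).val = 0 := rfl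
lemma v21 : (1 : ZMod 2).val = 1 := rfl

lemma phi00 : phi (.ofAdd 0, .ofAdd 0) = 1 := by
  rw [phi_apply, v40, v20, pow_zero, pow_zero, one_mul]
lemma phi10 : phi (.ofAdd 1, .ofAdd 0) = qrot qj 1 norm_qj norm_one := by
  rw [phi_apply, v41, v20, pow_one, pow_zero, mul_one, gA_def]
lemma phi20 : phi (.ofAdd 2, .ofAdd 0) = qrot (-1) 1 norm_neg_one norm_one := by
  rw [phi_apply, v42, v20, pow_zero, mul_one, gA_pow2]
lemma phi30 : phi (.ofAdd 3, .ofAdd 0) = qrot (-qj) 1 norm_neg_qj norm_one := by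
  rw [phi_apply, v43, v20, pow_zero, mul_one, gA_pow3]
lemma phi01 : phi (.ofAdd 0, .ofAdd 1) = qrot qj qj norm_qj norm_qj := by
  rw [phi_apply, v40, v21, pow_zero, pow_one, one_mul, gS_def]
lemma phi11 : phi (.ofAdd 1, .ofAdd 1) = qrot (-1) qj norm_neg_one norm_qj := by
  rw [phi_apply, v41, v21, pow_one, pow_one, AS_val]
lemma phi21 : phi (.ofAdd 2, .ofAdd 1) = qrot (-qj) qj norm_neg_qj norm_qj := by
  rw [phi_apply, v42, v21, pow_one, A2S_val]
lemma phi31 : phi (.ofAdd 3, .ofAdd 1) = qrot 1 qj norm_one norm_qj := by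
  rw [phi_apply, v43, v21, pow_one, A3S_val]

lemma normalizer_le_range (m : ℕ) (hm : 3 ≤ m) (hodd : Odd m) :
    normalizerInG3 m ≤ phi.range := by
  intro g hg
  obtain ⟨hnorm, hG3⟩ := Subgroup.mem_inf.mp hg
  obtain ⟨l, r, hl, hr, Pl, Pr, rfl⟩ := G3_le_bigH m (by omega) hG3
  have hconj := (Subgroup.mem_normalizer_iff.mp hnorm gS).mp gS_mem_sigma
  rcases sigma_eq hconj with h1 | h1
  · exfalso
    apply gS_ne_one
    have h2 : gS = (qrot l r hl hr)⁻¹ * (qrot l r hl hr * gS * (qrot l r hl hr)⁻¹)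
        * qrot l r hl hr := by group
    rw [h1] at h2
    simpa using h2
  · have hcomm : qrot l r hl hr * gS = gS * qrot l r hl hr := by
      have h2 := congrArg (fun t => t * qrot l r hl hr) h1
      simpa [mul_assoc] using h2
    rw [gS_def, qrot_mul hl hr norm_qj norm_qj (norm_mul_one norm_qj hl)
        (norm_mul_one norm_qj hr),
      qrot_mul norm_qj norm_qj hl hr (norm_mul_one hl norm_qj)
        (norm_mul_one hr norm_qj)] at hcomm
    rcases qrot_eq hcomm with ⟨hL, hR⟩ | ⟨hL, hR⟩
    · have hm2 : 2 * m ≠ 0 := by omega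
      rcases Pz_comm_classify hm2 Pl hL with rfl | rfl | rfl | rfl <;>
        rcases Pz_comm_classify (by norm_num) Pr hR with rfl | rfl | rfl | rfl
      · exact ⟨(.ofAdd 0, .ofAdd 0), phi00.trans qrot_one.symm⟩
      · exact ⟨(.ofAdd 2, .ofAdd 0),
          phi20.trans (qrot_eq_qrot_of fun x => by simp [star_qj])⟩
      · exact ⟨(.ofAdd 3, .ofAdd 1),
          phi31.trans (qrot_eq_qrot_of fun x => by simp [star_qj])⟩
      · exact ⟨(.ofAdd 1, .ofAdd 1),
          phi11.trans (qrot_eq_qrot_of fun x => by simp [star_qj])⟩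
      · exact ⟨(.ofAdd 2, .ofAdd 0),
          phi20.trans (qrot_eq_qrot_of fun x => by simp [star_qj])⟩
      · exact ⟨(.ofAdd 0, .ofAdd 0),
          phi00.trans (qrot_one.symm.trans (qrot_eq_qrot_of fun x => by simp [star_qj]))⟩
      · exact ⟨(.ofAdd 1, .ofAdd 1),
          phi11.trans (qrot_eq_qrot_of fun x => by simp [star_qj])⟩
      · exact ⟨(.ofAdd 3, .ofAdd 1),
          phi31.trans (qrot_eq_qrot_of fun x => by simp [star_qj])⟩
      · exact ⟨(.ofAdd 1, .ofAdd 0),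
          phi10.trans (qrot_eq_qrot_of fun x => by simp [star_qj])⟩
      · exact ⟨(.ofAdd 3, .ofAdd 0),
          phi30.trans (qrot_eq_qrot_of fun x => by simp [star_qj])⟩
      · exact ⟨(.ofAdd 0, .ofAdd 1),
          phi01.trans (qrot_eq_qrot_of fun x => by simp [star_qj])⟩
      · exact ⟨(.ofAdd 2, .ofAdd 1),
          phi21.trans (qrot_eq_qrot_of fun x => by simp [star_qj])⟩
      · exact ⟨(.ofAdd 3, .ofAdd 0),
          phi30.trans (qrot_eq_qrot_of fun x => by simp [star_qj])⟩
      · exact ⟨(.ofAdd 1, .ofAdd 0),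
          phi10.trans (qrot_eq_qrot_of fun x => by simp [star_qj])⟩
      · exact ⟨(.ofAdd 2, .ofAdd 1),
          phi21.trans (qrot_eq_qrot_of fun x => by simp [star_qj])⟩
      · exact ⟨(.ofAdd 0, .ofAdd 1),
          phi01.trans (qrot_eq_qrot_of fun x => by simp [star_qj])⟩
    · exact absurd hL (fun hL => Pz_anticomm_false hodd Pl hL)

end RangePhi
/-- The normalizer of `Σ = ⟨[j,j]⟩` in `G₃(m)` has exactly 8 elements and is
isomorphic to `ℤ/4ℤ × ℤ/2ℤ`. -/
theorem normalizer_of_SigmaJJ (m : ℕ) (hm : 3 ≤ m) (hodd : Odd m) :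
    Nat.card (normalizerInG3 m) = 8 ∧
    Nonempty ((normalizerInG3 m) ≃* (Multiplicative (ZMod 4) × Multiplicative (ZMod 2))) := by
  have hA_G3 : gA ∈ G3 m := Subgroup.subset_closure
    (Set.mem_insert_iff.mpr (Or.inr (Set.mem_insert_iff.mpr (Or.inr
      (Set.mem_insert_iff.mpr (Or.inl gA_def))))))
  have hB_G3 : qrot 1 qj norm_one norm_qj ∈ G3 m := Subgroup.subset_closure
    (Set.mem_insert_iff.mpr (Or.inr (Set.mem_insert_iff.mpr (Or.inr
      (Set.mem_insert_iff.mpr (Or.inr rfl))))))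
  have hS_G3 : gS ∈ G3 m := by
    have hAB : gA * qrot 1 qj norm_one norm_qj = gS := by
      rw [gA_def, gS_def, qrot_mul norm_qj norm_one norm_one norm_qj
        (norm_mul_one norm_one norm_qj) (norm_mul_one norm_qj norm_one)]
      exact qrot_congr (one_mul qj) (mul_one qj) _ _ _ _
    rw [← hAB]
    exact mul_mem hA_G3 hB_G3
  have hA_N : gA ∈ normalizerInG3 m :=
    Subgroup.mem_inf.mpr ⟨mem_norm_of_comm gA_comm_gS, hA_G3⟩
  have hS_N : gS ∈ normalizerInG3 m :=
    Subgroup.mem_inf.mpr ⟨mem_norm_of_comm rfl, hS_G3⟩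
  have hle : phi.range ≤ normalizerInG3 m := by
    rintro g ⟨p, rfl⟩
    rw [phi_apply']
    exact mul_mem (pow_mem hA_N _) (pow_mem hS_N _)
  have hrange : phi.range = normalizerInG3 m :=
    le_antisymm hle (normalizer_le_range m hm hodd)
  have iso : (normalizerInG3 m) ≃* (Multiplicative (ZMod 4) × Multiplicative (ZMod 2)) :=
    (MulEquiv.subgroupCongr hrange.symm).trans (MonoidHom.ofInjective phi_inj).symm
  constructor
  · rw [Nat.card_congr iso.toEquiv]
    rw [Nat.card_prod]
    simp [Nat.card_eq_fintype_card]
  · exact ⟨iso⟩
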